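/- Let f, g be functions on (0,∞) whose Mellin transforms f*, g* on the line σ = {Re s = 1/2} satisfy ∫_{−∞}^∞ |(1/2 + iτ) f*(1/2 + iτ)|² dτ < ∞ and ∫_{−∞}^∞ |(1/2 + iθ) g*(1/2 + iθ)|² dθ < ∞. Then the convolution (f∗g)(x) = (√x/(2πi)²) ∫_σ ∫_σ [Γ(s)Γ(1−s)Γ(w)Γ(1−w)/(Γ(s+w−1/2)Γ(3/2−s−w))]² f*(s) g*(w) x^{−s−w} ds dw exists as an absolutely convergent integral, defines a continuous function on (0,∞), and satisfies the pointwise bound |(f∗g)(x)| ≤ (2π/√x) (∫_{−∞}^∞ |(1/2 + iτ) f*(1/2 + iτ)|² dτ)^{1/2} (∫_{−∞}^∞ |(1/2 + iθ) g*(1/2 + iθ)|² dθ)^{1/2} for all x > 0. -/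

import Mathlib

open MeasureTheory Set Complex Filter

/-- The iterated Stieltjes transform. -/
noncomputable def S2 (f : ℝ → ℂ) (x : ℝ) : ℂ :=
  ∫ t in Ioi (0 : ℝ), (((Real.log x - Real.log t) / (x - t) : ℝ) : ℂ) * f t

/-- `fs` is the Mellin transform of `f` on the critical line `Re s = 1/2`,
in the mean-square (Mellin–Plancherel) sense. -/
def IsMellinPlancherel (f : ℝ → ℂ) (fs : ℂ → ℂ) : Prop :=
  Tendsto (fun R : ℝ =>
      ∫ τ : ℝ, ‖fs (1 / 2 + τ * I) -
        ∫ t in Ioo R⁻¹ R, (t : ℂ) ^ ((1 / 2 : ℂ) + τ * I - 1) * f t‖ ^ 2)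
    atTop (nhds 0)

/-- `L` is the Cauchy principal value `PV ∫₀^∞ f t/(t − x) dt` (the Hilbert transform of `f`
at `x`), understood as `lim_{ε→0⁺} (∫₀^{x/(1+ε)} + ∫_{x/(1−ε)}^∞) f t/(t − x) dt`. -/
def HasHilbertPV (f : ℝ → ℂ) (x : ℝ) (L : ℂ) : Prop :=
  Tendsto (fun ε : ℝ =>
      (∫ t in Ioo (0 : ℝ) (x / (1 + ε)), f t / ((t : ℂ) - (x : ℂ))) +
      ∫ t in Ioi (x / (1 - ε)), f t / ((t : ℂ) - (x : ℂ)))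
    (nhdsWithin 0 (Ioi 0)) (nhds L)

/-- The gamma kernel of the Mellin–Barnes convolution. -/
noncomputable def Kker (s w : ℂ) : ℂ :=
  Complex.Gamma s * Complex.Gamma (1 - s) * Complex.Gamma w * Complex.Gamma (1 - w) /
    (Complex.Gamma (s + w - 1 / 2) * Complex.Gamma (3 / 2 - s - w))

/-- The integrand of the double Mellin–Barnes convolution integral, with both critical lines
parametrized as `s = 1/2 + iτ`, `w = 1/2 + iθ`. -/
noncomputable def convIntegrand (fs gs : ℂ → ℂ) (x : ℝ) (q : ℝ × ℝ) : ℂ :=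
  (Kker (1 / 2 + q.1 * I) (1 / 2 + q.2 * I)) ^ 2 *
    fs (1 / 2 + q.1 * I) * gs (1 / 2 + q.2 * I) *
    (x : ℂ) ^ (-((1 / 2 + q.1 * I) + (1 / 2 + q.2 * I)))

/-- The Mellin–Barnes convolution `(f∗g)(x)`; since `ds dw = i dτ · i dθ` on the two critical
lines, `(√x/(2πi)²) ∫_σ∫_σ … ds dw = (√x/(4π²)) ∫∫ … dτ dθ`. -/
noncomputable def conv (fs gs : ℂ → ℂ) (x : ℝ) : ℂ :=
  ((Real.sqrt x / (4 * Real.pi ^ 2) : ℝ) : ℂ) * ∫ q : ℝ × ℝ, convIntegrand fs gs x q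

/-- `s ↦ s·fs(s)` belongs to `L₂` of the critical line `Re s = 1/2`. -/
def L2Line (fs : ℂ → ℂ) : Prop :=
  MemLp (fun τ : ℝ => ((1 / 2 : ℂ) + τ * I) * fs (1 / 2 + τ * I)) 2 volume

/-- `s ↦ s·fs(s)` belongs to `L₁` of the critical line `Re s = 1/2`. -/
def L1Line (fs : ℂ → ℂ) : Prop :=
  Integrable (fun τ : ℝ => ((1 / 2 : ℂ) + τ * I) * fs (1 / 2 + τ * I))

section Aux

open scoped Real

lemma sin_line' (τ : ℝ) : Complex.sin (π * (1/2 + τ*I)) = (Real.cosh (π*τ) : ℂ) := by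
  have h : (π:ℂ) * (1/2 + τ*I) = π/2 + ((π*τ : ℝ):ℂ)*I := by push_cast; ring
  rw [h, Complex.sin_add]
  simp [Complex.cos_mul_I, Complex.ofReal_cosh]

lemma kker_line (τ θ : ℝ) :
    Kker (1/2 + τ*I) (1/2 + θ*I) =
      ((π * Real.cosh (π*(τ+θ)) / (Real.cosh (π*τ) * Real.cosh (π*θ)) : ℝ) : ℂ) := by
  have e1 : (1/2 + (τ:ℂ)*I) + (1/2 + (θ:ℂ)*I) - 1/2 = 1/2 + ((τ+θ:ℝ):ℂ)*I := by
    push_cast; ring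
  have e2 : 3/2 - (1/2 + (τ:ℂ)*I) - (1/2 + (θ:ℂ)*I) = 1 - (1/2 + ((τ+θ:ℝ):ℂ)*I) := by
    push_cast; ring
  have hnum : Complex.Gamma (1/2 + τ*I) * Complex.Gamma (1 - (1/2 + τ*I)) *
      Complex.Gamma (1/2 + θ*I) * Complex.Gamma (1 - (1/2 + θ*I)) =
      (Complex.Gamma (1/2 + τ*I) * Complex.Gamma (1 - (1/2 + τ*I))) *
      (Complex.Gamma (1/2 + θ*I) * Complex.Gamma (1 - (1/2 + θ*I))) := by ring
  unfold Kker
  rw [e1, e2, hnum, Complex.Gamma_mul_Gamma_one_sub, Complex.Gamma_mul_Gamma_one_sub,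
    Complex.Gamma_mul_Gamma_one_sub, sin_line', sin_line', sin_line']
  have c1 := (Real.cosh_pos (π*τ)).ne'
  have c2 := (Real.cosh_pos (π*θ)).ne'
  have c3 := (Real.cosh_pos (π*(τ+θ))).ne'
  have hπ : (π:ℂ) ≠ 0 := by exact_mod_cast Real.pi_ne_zero
  push_cast
  ring_nf
  field_simp

lemma kker_norm_le (τ θ : ℝ) : ‖Kker (1/2 + τ*I) (1/2 + θ*I)‖ ≤ 2 * π := by
  rw [kker_line, Complex.norm_real, Real.norm_eq_abs]
  have c1 := Real.cosh_pos (π*τ)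
  have c2 := Real.cosh_pos (π*θ)
  have c3 := Real.cosh_pos (π*(τ+θ))
  have hnn : (0:ℝ) ≤ π * Real.cosh (π*(τ+θ)) / (Real.cosh (π*τ) * Real.cosh (π*θ)) := by
    positivity
  rw [_root_.abs_of_nonneg hnn, div_le_iff₀ (by positivity)]
  have key : Real.cosh (π*(τ+θ)) ≤ 2 * (Real.cosh (π*τ) * Real.cosh (π*θ)) := by
    have h1 : π*(τ+θ) = π*τ + π*θ := by ring
    rw [h1, Real.cosh_add]
    have h2 := Real.cosh_sub (π*τ) (π*θ)
    have h3 := Real.cosh_pos (π*τ - π*θ)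
    nlinarith
  nlinarith [Real.pi_pos]

lemma line_ne_zero (τ : ℝ) : ((1/2 : ℂ) + τ * I) ≠ 0 := by
  intro h
  have := congrArg Complex.re h
  simp at this

lemma aesm_line {fs : ℂ → ℂ} (h : L2Line fs) :
    AEStronglyMeasurable (fun τ : ℝ => fs (1/2 + τ*I)) volume := by
  have h2 : Continuous fun τ : ℝ => ((1/2:ℂ) + τ*I)⁻¹ := by
    refine Continuous.inv₀ (by continuity) fun τ => line_ne_zero τ
  refine (h2.aestronglyMeasurable.mul h.1).congr ?_
  filter_upwards with τ
  simp only [Pi.mul_apply]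
  rw [inv_mul_cancel_left₀ (line_ne_zero τ)]

lemma inv_sq_int : Integrable (fun τ : ℝ => (1/4 + τ^2)⁻¹) := by
  have h : ∀ τ : ℝ, (1/4 + τ^2)⁻¹ = 4 * (1 + (2*τ)^2)⁻¹ := by
    intro τ
    rw [eq_comm, mul_inv_eq_iff_eq_mul₀ (by positivity)]
    field_simp
    ring
  simp only [h]
  exact (integrable_inv_one_add_sq.comp_mul_left' two_ne_zero).const_mul 4

lemma inv_sq_val : (∫ τ : ℝ, (1/4 + τ^2)⁻¹) = 2 * π := by
  have h : ∀ τ : ℝ, (1/4 + τ^2)⁻¹ = 4 * (1 + (2*τ)^2)⁻¹ := by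
    intro τ
    rw [eq_comm, mul_inv_eq_iff_eq_mul₀ (by positivity)]
    field_simp
    ring
  simp only [h]
  rw [MeasureTheory.integral_const_mul]
  have := MeasureTheory.Measure.integral_comp_mul_left (fun x : ℝ => (1 + x^2)⁻¹) 2
  simp only [this, integral_univ_inv_one_add_sq]
  rw [abs_of_pos (by norm_num : (0:ℝ) < 2⁻¹)]
  simp [smul_eq_mul]
  ring

lemma norm_line_sq (τ : ℝ) : ‖(1/2 : ℂ) + τ * I‖^2 = 1/4 + τ^2 := by
  rw [Complex.sq_norm, Complex.normSq_apply]
  simp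
  ring

lemma line_facts {fs : ℂ → ℂ} (h : L2Line fs) :
    Integrable (fun τ : ℝ => ‖fs (1/2 + τ*I)‖) ∧
    (∫ τ : ℝ, ‖fs (1/2 + τ*I)‖) ≤ Real.sqrt (2*π) *
      Real.sqrt (∫ τ : ℝ, ‖((1/2 : ℂ) + τ*I) * fs (1/2 + τ*I)‖^2) := by
  set A : ℝ → ℝ := fun τ => ‖(1/2 : ℂ) + τ*I‖⁻¹ with hA_def
  set B : ℝ → ℝ := fun τ => ‖((1/2 : ℂ) + τ*I) * fs (1/2 + τ*I)‖ with hB_def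
  have hAB : ∀ τ : ℝ, ‖fs (1/2 + τ*I)‖ = A τ * B τ := by
    intro τ
    have h0 : ‖(1/2 : ℂ) + τ*I‖ ≠ 0 := norm_ne_zero_iff.2 (line_ne_zero τ)
    simp only [hA_def, hB_def, norm_mul]
    rw [inv_mul_cancel_left₀ h0]
  have hAcont : Continuous A := by
    refine Continuous.inv₀ (by continuity) fun τ => norm_ne_zero_iff.2 (line_ne_zero τ)
  have hA2 : ∀ τ, A τ^2 = (1/4 + τ^2)⁻¹ := by
    intro τ
    simp only [hA_def]
    rw [← norm_line_sq τ]
    rw [inv_pow]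
  have hA : MemLp A 2 (volume : Measure ℝ) := by
    rw [memLp_two_iff_integrable_sq hAcont.aestronglyMeasurable]
    simpa only [hA2] using inv_sq_int
  have hB : MemLp B 2 (volume : Measure ℝ) := h.norm
  have hABint : Integrable (fun τ => A τ * B τ) := by
    refine Integrable.mono' (((hA.integrable_sq.add hB.integrable_sq)).const_mul (1/2))
      (hAcont.aestronglyMeasurable.mul hB.aestronglyMeasurable) ?_
    filter_upwards with τ
    simp only [Pi.add_apply]
    have hA0 : 0 ≤ A τ := by positivity
    have hB0 : 0 ≤ B τ := norm_nonneg _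
    rw [Real.norm_eq_abs, _root_.abs_of_nonneg (mul_nonneg hA0 hB0)]
    nlinarith [sq_nonneg (A τ - B τ)]
  constructor
  · exact hABint.congr (by filter_upwards with τ using (hAB τ).symm)
  · have hconj : Real.HolderConjugate 2 2 := by constructor <;> norm_num
    have h2 : (ENNReal.ofReal (2:ℝ)) = 2 := by simp [ENNReal.ofReal_ofNat]
    have hHolder := integral_mul_le_Lp_mul_Lq_of_nonneg hconj
      (Eventually.of_forall fun τ => by positivity)
      (Eventually.of_forall fun τ => norm_nonneg _) (h2 ▸ hA) (h2 ▸ hB)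
    calc (∫ τ : ℝ, ‖fs (1/2 + τ*I)‖) = ∫ τ, A τ * B τ := by
          exact integral_congr_ae (Eventually.of_forall hAB)
      _ ≤ (∫ τ, A τ ^ (2:ℝ)) ^ ((1:ℝ)/2) * (∫ τ, B τ ^ (2:ℝ)) ^ ((1:ℝ)/2) := hHolder
      _ = Real.sqrt (2*π) * Real.sqrt (∫ τ, B τ^2) := by
          have hr : ∀ g : ℝ → ℝ, (fun τ => g τ ^ (2:ℝ)) = fun τ => g τ ^ 2 := by
            intro g; funext τ
            rw [show (2:ℝ) = ((2:ℕ):ℝ) by norm_num, Real.rpow_natCast]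
          rw [hr A, hr B]
          simp only [hA2]
          rw [inv_sq_val, ← Real.sqrt_eq_rpow, ← Real.sqrt_eq_rpow]

lemma conv_aesm {fs gs : ℂ → ℂ} (hf : L2Line fs) (hg : L2Line gs) {x : ℝ} (hx : 0 < x) :
    AEStronglyMeasurable (convIntegrand fs gs x) (volume : Measure (ℝ × ℝ)) := by
  have hprod : (volume : Measure (ℝ × ℝ)) = (volume : Measure ℝ).prod volume :=
    Measure.volume_eq_prod ℝ ℝ
  have hfm : AEStronglyMeasurable (fun q : ℝ × ℝ => fs (1/2 + q.1*I))
      (volume : Measure (ℝ × ℝ)) := by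
    rw [hprod]; exact (aesm_line hf).comp_fst
  have hgm : AEStronglyMeasurable (fun q : ℝ × ℝ => gs (1/2 + q.2*I))
      (volume : Measure (ℝ × ℝ)) := by
    rw [hprod]; exact (aesm_line hg).comp_snd
  have hKc : Continuous (fun q : ℝ × ℝ =>
      ((π * Real.cosh (π*(q.1+q.2)) / (Real.cosh (π*q.1) * Real.cosh (π*q.2)) : ℝ) : ℂ)) := by
    refine Complex.continuous_ofReal.comp ?_
    refine Continuous.div (by fun_prop) (by fun_prop) fun q =>
      (mul_pos (Real.cosh_pos _) (Real.cosh_pos _)).ne'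
  have hK : AEStronglyMeasurable
      (fun q : ℝ × ℝ => (Kker (1/2 + q.1*I) (1/2 + q.2*I))^2) (volume : Measure (ℝ × ℝ)) := by
    have : (fun q : ℝ × ℝ => (Kker (1/2 + q.1*I) (1/2 + q.2*I))^2) =
        fun q : ℝ × ℝ => ((π * Real.cosh (π*(q.1+q.2)) /
          (Real.cosh (π*q.1) * Real.cosh (π*q.2)) : ℝ) : ℂ)^2 := by
      funext q; rw [kker_line]
    rw [this]
    exact (hKc.pow 2).aestronglyMeasurable
  have hcc : Continuous (fun q : ℝ × ℝ =>
      (x:ℂ) ^ (-((1/2 + q.1*I) + (1/2 + q.2*I)))) := by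
    have hx0 : (x:ℂ) ≠ 0 := by exact_mod_cast hx.ne'
    have : (fun q : ℝ × ℝ => (x:ℂ) ^ (-((1/2 + q.1*I) + (1/2 + q.2*I)))) =
        fun q : ℝ × ℝ => Complex.exp (Complex.log x * (-((1/2 + q.1*I) + (1/2 + q.2*I)))) := by
      funext q; rw [Complex.cpow_def_of_ne_zero hx0]
    rw [this]
    exact Complex.continuous_exp.comp (continuous_const.mul (by continuity))
  exact ((hK.mul hfm).mul hgm).mul hcc.aestronglyMeasurable

lemma conv_integrand_norm_le {fs gs : ℂ → ℂ} {x : ℝ} (hx : 0 < x) (q : ℝ × ℝ) :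
    ‖convIntegrand fs gs x q‖ ≤
      (4*π^2*x⁻¹) * (‖fs (1/2 + q.1*I)‖ * ‖gs (1/2 + q.2*I)‖) := by
  unfold convIntegrand
  rw [norm_mul, norm_mul, norm_mul, norm_pow]
  have hcp : ‖(x:ℂ) ^ (-((1/2 + (q.1:ℂ)*I) + (1/2 + (q.2:ℂ)*I)))‖ = x⁻¹ := by
    rw [Complex.norm_cpow_eq_rpow_re_of_pos hx]
    have hre : (-((1/2 + (q.1:ℂ)*I) + (1/2 + (q.2:ℂ)*I))).re = -1 := by
      simp
      ring
    rw [hre, Real.rpow_neg_one]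
  rw [hcp]
  have h1 : ‖Kker (1/2 + q.1*I) (1/2 + q.2*I)‖^2 ≤ (2*π)^2 :=
    pow_le_pow_left₀ (norm_nonneg _) (kker_norm_le q.1 q.2) 2
  have hx1 : (0:ℝ) ≤ x⁻¹ := by positivity
  calc ‖Kker (1/2 + q.1*I) (1/2 + q.2*I)‖^2 * ‖fs (1/2 + q.1*I)‖ * ‖gs (1/2 + q.2*I)‖ * x⁻¹
      ≤ (2*π)^2 * ‖fs (1/2 + q.1*I)‖ * ‖gs (1/2 + q.2*I)‖ * x⁻¹ := by
        gcongr
    _ = (4*π^2*x⁻¹) * (‖fs (1/2 + q.1*I)‖ * ‖gs (1/2 + q.2*I)‖) := by ring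

end Aux

open scoped Real

/-- **Lemma 1, part 1.** If `s f*(s), s g*(s) ∈ L₂(σ)`, the Mellin–Barnes
convolution exists as an absolutely convergent integral, is continuous on `(0,∞)`, and
`|(f∗g)(x)| ≤ (2π/√x) ‖s f*‖_{L₂(σ)} ‖s g*‖_{L₂(σ)}` for all `x > 0`. -/
theorem conv_exists_continuous_bound (f g : ℝ → ℂ)
    (hf : MemLp f 2 (volume.restrict (Ioi (0 : ℝ))))
    (hg : MemLp g 2 (volume.restrict (Ioi (0 : ℝ))))
    (fstar gstar : ℂ → ℂ)
    (hfstar : IsMellinPlancherel f fstar) (hgstar : IsMellinPlancherel g gstar)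
    (hf2 : L2Line fstar) (hg2 : L2Line gstar) :
    (∀ x : ℝ, 0 < x → Integrable (convIntegrand fstar gstar x)) ∧
    ContinuousOn (conv fstar gstar) (Ioi (0 : ℝ)) ∧
    ∀ x : ℝ, 0 < x →
      ‖conv fstar gstar x‖ ≤ (2 * Real.pi / Real.sqrt x) *
        Real.sqrt (∫ τ : ℝ, ‖((1 / 2 : ℂ) + τ * I) * fstar (1 / 2 + τ * I)‖ ^ 2) *
        Real.sqrt (∫ θ : ℝ, ‖((1 / 2 : ℂ) + θ * I) * gstar (1 / 2 + θ * I)‖ ^ 2) := by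
  have hprod : (volume : Measure (ℝ × ℝ)) = (volume : Measure ℝ).prod volume :=
    Measure.volume_eq_prod ℝ ℝ
  set F : ℝ → ℝ := fun τ => ‖fstar (1/2 + τ*I)‖ with hF_def
  set G : ℝ → ℝ := fun θ => ‖gstar (1/2 + θ*I)‖ with hG_def
  obtain ⟨hFint, hFbd⟩ := line_facts hf2
  obtain ⟨hGint, hGbd⟩ := line_facts hg2
  have hFGint : Integrable (fun q : ℝ × ℝ => F q.1 * G q.2) (volume : Measure (ℝ × ℝ)) := by
    rw [hprod]; exact hFint.mul_prod hGint
  have hF0 : 0 ≤ ∫ τ, F τ := integral_nonneg fun τ => norm_nonneg _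
  have hG0 : 0 ≤ ∫ θ, G θ := integral_nonneg fun θ => norm_nonneg _
  -- Part 1 : integrability
  have part1 : ∀ x : ℝ, 0 < x → Integrable (convIntegrand fstar gstar x) := by
    intro x hx
    refine Integrable.mono' (hFGint.const_mul (4*π^2*x⁻¹)) (conv_aesm hf2 hg2 hx) ?_
    filter_upwards with q
    exact conv_integrand_norm_le hx q
  refine ⟨part1, ?_, ?_⟩
  -- Part 2 : continuity
  · intro x₀ hx₀
    rw [mem_Ioi] at hx₀
    apply ContinuousAt.continuousWithinAt
    show ContinuousAt (fun x : ℝ => ((Real.sqrt x / (4 * π ^ 2) : ℝ) : ℂ) *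
      ∫ q : ℝ × ℝ, convIntegrand fstar gstar x q) x₀
    refine ContinuousAt.mul ?_ ?_
    · exact (Complex.continuous_ofReal.comp
        (Real.continuous_sqrt.div_const _)).continuousAt
    · have hev : ∀ᶠ x in nhds x₀, x ∈ Ioi (x₀/2) :=
        isOpen_Ioi.eventually_mem (by simpa using by linarith : x₀ ∈ Ioi (x₀/2))
      refine continuousAt_of_dominated ?_ ?_ ?_ ?_
        (bound := fun q => (4*π^2*(2/x₀)) * (F q.1 * G q.2))
      · filter_upwards [hev] with x hxx
        have hxp : 0 < x := lt_trans (half_pos hx₀) (mem_Ioi.1 hxx)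
        exact conv_aesm hf2 hg2 hxp
      · filter_upwards [hev] with x hxx
        filter_upwards with q
        have hx2 : x₀/2 < x := mem_Ioi.1 hxx
        have hxp : 0 < x := lt_trans (half_pos hx₀) hx2
        refine (conv_integrand_norm_le hxp q).trans ?_
        have hinv : x⁻¹ ≤ 2/x₀ := by
          rw [← inv_div x₀ 2]
          exact inv_anti₀ (half_pos hx₀) hx2.le
        have hco : 4*π^2*x⁻¹ ≤ 4*π^2*(2/x₀) :=
          mul_le_mul_of_nonneg_left hinv (by positivity)
        exact mul_le_mul_of_nonneg_right hco
          (mul_nonneg (norm_nonneg _) (norm_nonneg _))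
      · exact hFGint.const_mul _
      · filter_upwards with q
        have hD : ContinuousAt (fun x : ℝ =>
            (x:ℂ) ^ (-((1/2 + (q.1:ℂ)*I) + (1/2 + (q.2:ℂ)*I)))) x₀ :=
          (continuousAt_cpow_const
            (Complex.ofReal_mem_slitPlane.2 hx₀)).comp
            Complex.continuous_ofReal.continuousAt
        show ContinuousAt (fun x : ℝ =>
          (Kker (1/2 + (q.1:ℂ)*I) (1/2 + (q.2:ℂ)*I))^2 * fstar (1/2 + q.1*I) *
            gstar (1/2 + q.2*I) * (x:ℂ) ^ (-((1/2 + (q.1:ℂ)*I) + (1/2 + (q.2:ℂ)*I)))) x₀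
        exact continuousAt_const.mul hD
  -- Part 3 : the bound
  · intro x hx
    set Cf := Real.sqrt (∫ τ : ℝ, ‖((1/2 : ℂ) + τ*I) * fstar (1/2 + τ*I)‖^2) with hCf_def
    set Cg := Real.sqrt (∫ θ : ℝ, ‖((1/2 : ℂ) + θ*I) * gstar (1/2 + θ*I)‖^2) with hCg_def
    have hCf0 : 0 ≤ Cf := Real.sqrt_nonneg _
    have hCg0 : 0 ≤ Cg := Real.sqrt_nonneg _
    have step1 : ‖conv fstar gstar x‖ ≤
        (Real.sqrt x / (4*π^2)) * ∫ q : ℝ × ℝ, ‖convIntegrand fstar gstar x q‖ := by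
      unfold conv
      rw [norm_mul, Complex.norm_real, Real.norm_eq_abs,
        _root_.abs_of_nonneg (by positivity)]
      exact mul_le_mul_of_nonneg_left (norm_integral_le_integral_norm _) (by positivity)
    have step2 : (∫ q : ℝ × ℝ, ‖convIntegrand fstar gstar x q‖) ≤
        (4*π^2*x⁻¹) * ((∫ τ, F τ) * (∫ θ, G θ)) := by
      have h1 : (∫ q : ℝ × ℝ, ‖convIntegrand fstar gstar x q‖) ≤
          ∫ q : ℝ × ℝ, (4*π^2*x⁻¹) * (F q.1 * G q.2) :=
        integral_mono (part1 x hx).norm (hFGint.const_mul _)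
          (fun q => conv_integrand_norm_le hx q)
      have h2 : (∫ q : ℝ × ℝ, (4*π^2*x⁻¹) * (F q.1 * G q.2)) =
          (4*π^2*x⁻¹) * ((∫ τ, F τ) * (∫ θ, G θ)) := by
        rw [MeasureTheory.integral_const_mul]
        congr 1
        rw [hprod]
        exact integral_prod_mul F G
      rw [h2] at h1
      exact h1
    have step3 : (∫ τ, F τ) * (∫ θ, G θ) ≤
        (Real.sqrt (2*π) * Cf) * (Real.sqrt (2*π) * Cg) :=
      mul_le_mul hFbd hGbd hG0 (by positivity)
    have key : (Real.sqrt x/(4*π^2)) *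
        ((4*π^2*x⁻¹) * ((Real.sqrt (2*π) * Cf) * (Real.sqrt (2*π) * Cg)))
        = (2*π/Real.sqrt x) * Cf * Cg := by
      have hsx : Real.sqrt x * Real.sqrt x = x := Real.mul_self_sqrt hx.le
      have h2πs : Real.sqrt (2*π) * Real.sqrt (2*π) = 2*π := Real.mul_self_sqrt (by positivity)
      have hsx0 : (0:ℝ) < Real.sqrt x := Real.sqrt_pos.2 hx
      have hπ0 : (0:ℝ) < π := Real.pi_pos
      have hxne : x ≠ 0 := hx.ne'
      have h1 : Real.sqrt x * x⁻¹ = (Real.sqrt x)⁻¹ := by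
        field_simp
        exact Real.sq_sqrt hx.le
      have expand : (Real.sqrt x/(4*π^2)) *
          ((4*π^2*x⁻¹) * ((Real.sqrt (2*π) * Cf) * (Real.sqrt (2*π) * Cg)))
          = (Real.sqrt x * x⁻¹) * ((Real.sqrt (2*π) * Real.sqrt (2*π)) * (Cf * Cg)) := by
        field_simp
      rw [expand, h1, h2πs, div_eq_mul_inv]
      ring
    calc ‖conv fstar gstar x‖
        ≤ (Real.sqrt x / (4*π^2)) * ∫ q : ℝ × ℝ, ‖convIntegrand fstar gstar x q‖ := step1
      _ ≤ (Real.sqrt x / (4*π^2)) * ((4*π^2*x⁻¹) * ((∫ τ, F τ) * (∫ θ, G θ))) :=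
          mul_le_mul_of_nonneg_left step2 (by positivity)
      _ ≤ (Real.sqrt x / (4*π^2)) *
          ((4*π^2*x⁻¹) * ((Real.sqrt (2*π) * Cf) * (Real.sqrt (2*π) * Cg))) := by
          refine mul_le_mul_of_nonneg_left (mul_le_mul_of_nonneg_left step3 ?_) (by positivity)
          positivity
      _ = (2*π/Real.sqrt x) * Cf * Cg := key
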